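/- Let T be a tree and let σ be an ordering of the vertices of T satisfying Property D (so that σ is a DFS-ordering of T), with first vertex r; regard T as rooted at r. Let x, y, z be vertices of T such that (1) the parents of x and y are distinct and both lie on the unique path from r to z in T, and (2) z <σ y <σ x. Then the parent of y is strictly closer to z than the parent of x in T, i.e., the distance in T from the parent of y to z is strictly smaller than the distance in T from the parent of x to z. -/

import Mathlib

/-- Property D for an ordering of the vertices (given as a linear order on the
vertex type) with respect to a graph `H`: the four-point characterization of
DFS-orderings. -/
def PropertyD {V : Type*} [LinearOrder V] (H : SimpleGraph V) : Prop :=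
  ∀ a b c : V, a < b → b < c → H.Adj a c → ¬ H.Adj a b →
    ∃ d : V, a < d ∧ d < b ∧ H.Adj d b

namespace DFSAux

open SimpleGraph

variable {V : Type*} [Fintype V] [LinearOrder V] {T : SimpleGraph V}

/-- `u` lies on every path from `r` to `v`. -/
def Anc (T : SimpleGraph V) (r u v : V) : Prop :=
  ∀ p : T.Walk r v, p.IsPath → u ∈ p.support

lemma exists_path (hT : T.IsTree) (u v : V) : ∃ p : T.Walk u v, p.IsPath := by
  obtain ⟨w⟩ := hT.isConnected.preconnected u v
  exact ⟨w.bypass, w.bypass_isPath⟩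

lemma path_eq (hT : T.IsTree) {u v : V} (p q : T.Walk u v) (hp : p.IsPath)
    (hq : q.IsPath) : p = q := by
  have := hT.IsAcyclic.path_unique ⟨p, hp⟩ ⟨q, hq⟩
  exact congrArg Subtype.val this

lemma anc_of_path (hT : T.IsTree) {r u v : V} (p : T.Walk r v) (hp : p.IsPath)
    (hu : u ∈ p.support) : Anc T r u v := by
  intro q hq
  rw [path_eq hT q p hq hp]
  exact hu

lemma isPath_concat {u v w : V} {p : T.Walk u v} (hp : p.IsPath) (h : T.Adj v w)
    (hw : w ∉ p.support) : (p.concat h).IsPath := by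
  have : (p.concat h).reverse.IsPath := by
    rw [SimpleGraph.Walk.reverse_concat]
    exact hp.reverse.cons (by simpa [SimpleGraph.Walk.support_reverse] using hw)
  have h2 := this.reverse
  rwa [SimpleGraph.Walk.reverse_reverse] at h2

lemma earlier_nbr (hD : PropertyD T) {a v : V} (p : T.Walk a v) (hav : a < v) :
    ∃ u, u < v ∧ T.Adj u v := by
  induction p with
  | nil => exact absurd hav (lt_irrefl _)
  | @cons a b v h q ih =>
    rcases lt_trichotomy b v with hb | hb | hb
    · exact ih hb
    · subst hb; exact ⟨a, hav, h⟩
    · by_cases hav' : T.Adj a v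
      · exact ⟨a, hav, hav'⟩
      · obtain ⟨d, _, hd2, hd3⟩ := hD a v b hav hb h hav'
        exact ⟨d, hd2, hd3⟩

lemma support_le (hT : T.IsTree) (hD : PropertyD T) {r : V} (hfirst : ∀ w : V, r ≤ w) :
    ∀ v (p : T.Walk r v), p.IsPath → ∀ u ∈ p.support, u ≤ v := by
  intro v
  induction v using WellFoundedLT.induction with
  | _ v ih =>
    intro p hp u hu
    by_cases hvr : v = r
    · subst hvr
      have : p = SimpleGraph.Walk.nil := SimpleGraph.Walk.isPath_iff_eq_nil.mp hp
      subst this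
      simp only [SimpleGraph.Walk.support_nil, List.mem_singleton] at hu
      exact le_of_eq hu
    · have hrv : r < v := lt_of_le_of_ne (hfirst v) (fun h => hvr h.symm)
      obtain ⟨u0, hu0v, hu0adj⟩ := earlier_nbr hD p hrv
      obtain ⟨s, hs⟩ := exists_path hT r u0
      by_cases hvs : v ∈ s.support
      · exact absurd (ih u0 hu0v s hs v hvs) (not_le.mpr hu0v)
      · have hq : (s.concat hu0adj).IsPath := isPath_concat hs hu0adj hvs
        have hpq : p = s.concat hu0adj := path_eq hT p _ hp hq
        rw [hpq, SimpleGraph.Walk.support_concat,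
          List.mem_append, List.mem_singleton] at hu
        rcases hu with h | h
        · exact le_of_lt (lt_of_le_of_lt (ih u0 hu0v s hs u h) hu0v)
        · exact le_of_eq h

lemma nbr_anc_strong (hT : T.IsTree) (hD : PropertyD T) {r : V}
    (hfirst : ∀ w : V, r ≤ w) {u v : V} (huv : u < v) (hadj : T.Adj u v) :
    ∃ s : T.Walk r u, s.IsPath ∧ v ∉ s.support ∧
      ∀ p : T.Walk r v, p.IsPath → p = s.concat hadj := by
  obtain ⟨s, hs⟩ := exists_path hT r u
  have hvs : v ∉ s.support := by
    intro hmem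
    exact absurd (support_le hT hD hfirst u s hs v hmem) (not_le.mpr huv)
  have hq : (s.concat hadj).IsPath := isPath_concat hs hadj hvs
  exact ⟨s, hs, hvs, fun p hp => path_eq hT p _ hp hq⟩

lemma nbr_anc (hT : T.IsTree) (hD : PropertyD T) {r : V}
    (hfirst : ∀ w : V, r ≤ w) {u v : V} (huv : u < v) (hadj : T.Adj u v) :
    Anc T r u v := by
  obtain ⟨s, hs, hvs, heq⟩ := nbr_anc_strong hT hD hfirst huv hadj
  intro p hp
  rw [heq p hp, SimpleGraph.Walk.support_concat, List.mem_append]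
  exact Or.inl s.end_mem_support

lemma anc_le (hT : T.IsTree) (hD : PropertyD T) {r : V} (hfirst : ∀ w : V, r ≤ w)
    {u v : V} (h : Anc T r u v) : u ≤ v := by
  obtain ⟨p, hp⟩ := exists_path hT r v
  exact support_le hT hD hfirst v p hp u (h p hp)

lemma anc_trans (hT : T.IsTree) {r u x m : V} (h1 : Anc T r u x) (h2 : Anc T r x m) :
    Anc T r u m := by
  intro p hp
  have hx : x ∈ p.support := h2 p hp
  have ht : (p.takeUntil x hx).IsPath := hp.takeUntil hx
  exact p.support_takeUntil_subset hx (h1 _ ht)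

lemma cross {m : V} : ∀ {a b : V} (s : T.Walk a b), a < m → m < b → m ∉ s.support →
    ∃ x y, T.Adj x y ∧ x < m ∧ m < y ∧ x ∈ s.support := by
  intro a b s
  induction s with
  | nil => intro h1 h2 _; exact absurd (h1.trans h2) (lt_irrefl _)
  | @cons a c b h q ih =>
    intro h1 h2 hm
    have hcm : c ≠ m := by
      intro e
      exact hm (by simp [← e])
    rcases lt_or_gt_of_ne hcm with hc | hc
    · obtain ⟨x, y, hxy, hx1, hy1, hxs⟩ := ih hc h2 (fun hmem => hm (by simp [hmem]))
      exact ⟨x, y, hxy, hx1, hy1, by simp [hxs]⟩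
    · exact ⟨a, c, h, h1, hc, by simp⟩

lemma between (hT : T.IsTree) (hD : PropertyD T) {r : V} (hfirst : ∀ w : V, r ≤ w) :
    ∀ m u w : V, u < m → m < w → Anc T r u w → Anc T r u m := by
  intro m
  induction m using WellFoundedLT.induction with
  | _ m ihm =>
    intro u w hum hmw hA
    obtain ⟨pw, hpw⟩ := exists_path hT r w
    have hu : u ∈ pw.support := hA pw hpw
    have hsp : (pw.dropUntil u hu).IsPath := hpw.dropUntil hu
    have hclaim : ∀ t, t ∈ (pw.dropUntil u hu).support → Anc T r u t := by
      intro t ht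
      have h1 : ((pw.dropUntil u hu).takeUntil t ht).append
          ((pw.dropUntil u hu).dropUntil t ht) = pw.dropUntil u hu :=
        (pw.dropUntil u hu).take_spec ht
      have h2 : (pw.takeUntil u hu).append (pw.dropUntil u hu) = pw := pw.take_spec hu
      have h3 : ((pw.takeUntil u hu).append ((pw.dropUntil u hu).takeUntil t ht)).append
          ((pw.dropUntil u hu).dropUntil t ht) = pw := by
        rw [← SimpleGraph.Walk.append_assoc, h1, h2]
      have hq : ((pw.takeUntil u hu).append ((pw.dropUntil u hu).takeUntil t ht)).IsPath := by
        apply SimpleGraph.Walk.IsPath.of_append_left (q := (pw.dropUntil u hu).dropUntil t ht)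
        rw [h3]; exact hpw
      apply anc_of_path hT _ hq
      rw [SimpleGraph.Walk.mem_support_append_iff]
      exact Or.inl (pw.takeUntil u hu).end_mem_support
    by_cases hm : m ∈ (pw.dropUntil u hu).support
    · exact hclaim m hm
    · obtain ⟨xx, yy, hadj, hx1, hy1, hxs⟩ := cross (pw.dropUntil u hu) hum hmw hm
      have hux : u ≤ xx := anc_le hT hD hfirst (hclaim xx hxs)
      by_cases hxm : T.Adj xx m
      · exact anc_trans hT (hclaim xx hxs) (nbr_anc hT hD hfirst hx1 hxm)
      · obtain ⟨d, hd1, hd2, hd3⟩ := hD xx m yy hx1 hy1 hadj hxm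
        have hAdm : Anc T r d m := nbr_anc hT hD hfirst hd2 hd3
        have hAud : Anc T r u d :=
          ihm d hd2 u w (lt_of_le_of_lt hux hd1) (hd2.trans hmw) hA
        exact anc_trans hT hAud hAdm

lemma dist_eq_length (hT : T.IsTree) {a b : V} (p : T.Walk a b) (hp : p.IsPath) :
    T.dist a b = p.length := by
  refine le_antisymm (SimpleGraph.dist_le p) ?_
  obtain ⟨q, hq⟩ := hT.isConnected.exists_walk_length_eq_dist a b
  have hqb : q.bypass = p := path_eq hT _ _ q.bypass_isPath hp
  calc p.length = q.bypass.length := by rw [hqb]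
    _ ≤ q.length := q.length_bypass_le
    _ = T.dist a b := hq

end DFSAux

open DFSAux SimpleGraph in
/-- Let `T` be a tree and `σ` a DFS-ordering of `T` (satisfying Property D) with
first vertex `r`; regard `T` as rooted at `r`.  Let `x, y, z` be vertices, and
let `x'` (resp. `y'`) be the parent of `x` (resp. of `y`), i.e. adjacent to `x`
(resp. `y`) and lying on the unique path from `r` to `x` (resp. to `y`).
Assume `x' ≠ y'`, both `x'` and `y'` lie on the unique path from `r` to `z`,
and `z <σ y <σ x`.  Then the parent `y'` of `y` is strictly closer to `z` than
the parent `x'` of `x`, in graph distance in `T`. -/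
theorem stmt4 {V : Type*} [Fintype V] [LinearOrder V] (T : SimpleGraph V)
    (hT : T.IsTree) (hD : PropertyD T)
    (r : V) (hfirst : ∀ w : V, r ≤ w)
    (x y z x' y' : V)
    (hx'adj : T.Adj x' x)
    (hx'path : ∀ p : T.Walk r x, p.IsPath → x' ∈ p.support)
    (hy'adj : T.Adj y' y)
    (hy'path : ∀ p : T.Walk r y, p.IsPath → y' ∈ p.support)
    (hne : x' ≠ y')
    (honpath : ∀ p : T.Walk r z, p.IsPath → x' ∈ p.support ∧ y' ∈ p.support)
    (hzy : z < y) (hyx : y < x) :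
    T.dist y' z < T.dist x' z := by
  obtain ⟨pz, hpz⟩ := exists_path hT r z
  obtain ⟨hx'z, hy'z⟩ := honpath pz hpz
  have hx'le : x' ≤ z := support_le hT hD hfirst z pz hpz x' hx'z
  have hy'le : y' ≤ z := support_le hT hD hfirst z pz hpz y' hy'z
  have hsp : (pz.dropUntil x' hx'z).IsPath := hpz.dropUntil hx'z
  by_cases hy's : y' ∈ (pz.dropUntil x' hx'z).support
  · -- `y'` comes after `x'` on the path from `r` to `z`: compute the distances.
    have h1 : T.dist x' z = (pz.dropUntil x' hx'z).length :=
      dist_eq_length hT _ hsp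
    have h2 : T.dist y' z = ((pz.dropUntil x' hx'z).dropUntil y' hy's).length :=
      dist_eq_length hT _ (hsp.dropUntil hy's)
    have h3 : ((pz.dropUntil x' hx'z).takeUntil y' hy's).length +
        ((pz.dropUntil x' hx'z).dropUntil y' hy's).length =
        (pz.dropUntil x' hx'z).length := by
      have := congrArg SimpleGraph.Walk.length ((pz.dropUntil x' hx'z).take_spec hy's)
      rwa [SimpleGraph.Walk.length_append] at this
    have h4 : ((pz.dropUntil x' hx'z).takeUntil y' hy's).length ≠ 0 := fun h0 =>
      hne (SimpleGraph.Walk.eq_of_length_eq_zero h0)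
    omega
  · -- otherwise `y'` is a strict ancestor of `x'`; derive a contradiction.
    exfalso
    have hy't : y' ∈ (pz.takeUntil x' hx'z).support := by
      have h := hy'z
      rw [← pz.take_spec hx'z, SimpleGraph.Walk.mem_support_append_iff] at h
      rcases h with h | h
      · exact h
      · exact absurd h hy's
    have hAy'x' : Anc T r y' x' :=
      anc_of_path hT _ (hpz.takeUntil hx'z) hy't
    have hAx'x : Anc T r x' x := fun p hp => hx'path p hp
    have hx'y : x' < y := lt_of_le_of_lt hx'le hzy
    have hAx'y : Anc T r x' y := between hT hD hfirst y x' x hx'y hyx hAx'x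
    have hy'y : y' < y := lt_of_le_of_lt hy'le hzy
    obtain ⟨sy, hsy, hysy, heq⟩ := nbr_anc_strong hT hD hfirst hy'y hy'adj
    obtain ⟨py, hpy⟩ := exists_path hT r y
    have hx'py : x' ∈ py.support := hAx'y py hpy
    rw [heq py hpy, SimpleGraph.Walk.support_concat,
      List.mem_append, List.mem_singleton] at hx'py
    have hx'sy : x' ∈ sy.support := by
      rcases hx'py with h | h
      · exact h
      · exact absurd h (ne_of_lt hx'y)
    have hAx'y' : Anc T r x' y' := anc_of_path hT sy hsy hx'sy
    exact hne (le_antisymm (anc_le hT hD hfirst hAx'y') (anc_le hT hD hfirst hAy'x'))
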